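/- Let (X,d) be a metric space, let (Mₙ) be a sequence of nonempty compact subsets of X and let M be a nonempty compact subset of X with hausdorffDist(Mₙ, M) → 0. Then there exists a strictly increasing map φ : ℕ → ℕ such that sup_{z ∈ Z₀(M_{φ(n)})} infDist(z, Z₀(M)) → 0 as n → ∞, where for a nonempty compact K the set of its relative Chebyshev centers belonging to K is Z₀(K) = {x ∈ K : sup_{y∈K} d(y,x) = R₀(K)} with R₀(K) = inf_{x∈K} sup_{y∈K} d(y,x) (Z₀(K) is nonempty for compact K). -/

import Mathlib

open Metric Filter

/-- The relative Chebyshev radius of a set `K` (with respect to `K` itself). -/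
noncomputable def chebR0 {X : Type*} [MetricSpace X] (K : Set X) : ℝ :=
  sInf ((fun x => sSup ((fun y => dist y x) '' K)) '' K)

/-- The set of relative Chebyshev centers of `K` belonging to `K`. -/
noncomputable def chebZ0 {X : Type*} [MetricSpace X] (K : Set X) : Set X :=
  {x ∈ K | sSup ((fun y => dist y x) '' K) = chebR0 K}

section Aux

variable {X : Type*} [MetricSpace X]

/-- Auxiliary: the farthest-distance function. -/
noncomputable def chebB (K : Set X) (x : X) : ℝ := sSup ((fun y => dist y x) '' K)

lemma chebR0_eq (K : Set X) : chebR0 K = sInf (chebB K '' K) := rfl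

lemma chebZ0_eq (K : Set X) : chebZ0 K = {x ∈ K | chebB K x = chebR0 K} := rfl

lemma chebB_bddAbove {K : Set X} (hK : IsCompact K) (x : X) :
    BddAbove ((fun y => dist y x) '' K) :=
  (hK.image (continuous_id.dist continuous_const)).bddAbove

lemma dist_le_chebB {K : Set X} (hK : IsCompact K) {y : X} (hy : y ∈ K) (x : X) :
    dist y x ≤ chebB K x :=
  le_csSup (chebB_bddAbove hK x) ⟨y, hy, rfl⟩

lemma chebB_nonneg {K : Set X} (hK : IsCompact K) (hne : K.Nonempty) (x : X) :
    0 ≤ chebB K x := by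
  obtain ⟨y, hy⟩ := hne
  exact dist_nonneg.trans (dist_le_chebB hK hy x)

lemma chebB_le_add_dist {K : Set X} (hK : IsCompact K) (hne : K.Nonempty) (x x' : X) :
    chebB K x ≤ chebB K x' + dist x' x := by
  apply csSup_le (hne.image _)
  rintro a ⟨y, hy, rfl⟩
  calc dist y x ≤ dist y x' + dist x' x := dist_triangle _ _ _
    _ ≤ chebB K x' + dist x' x := by
        have := dist_le_chebB hK hy x'
        linarith

lemma abs_chebB_sub_le {K : Set X} (hK : IsCompact K) (hne : K.Nonempty) (x x' : X) :
    |chebB K x - chebB K x'| ≤ dist x x' := by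
  rw [abs_sub_le_iff]
  constructor
  · have h := chebB_le_add_dist hK hne x x'
    rw [dist_comm x' x] at h
    linarith
  · have h := chebB_le_add_dist hK hne x' x
    linarith

lemma chebB_lipschitz {K : Set X} (hK : IsCompact K) (hne : K.Nonempty) :
    LipschitzWith 1 (chebB K) := by
  apply LipschitzWith.of_dist_le_mul
  intro x y
  simp only [NNReal.coe_one, one_mul, Real.dist_eq]
  exact abs_chebB_sub_le hK hne x y

lemma chebB_le_of_hausdorff {K K' : Set X} (hK : IsCompact K) (hne : K.Nonempty)
    (hK' : IsCompact K') (hne' : K'.Nonempty) (x : X) :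
    chebB K x ≤ chebB K' x + hausdorffDist K K' := by
  have htop : EMetric.hausdorffEdist K K' ≠ ⊤ :=
    hausdorffEdist_ne_top_of_nonempty_of_bounded hne hne' hK.isBounded hK'.isBounded
  apply csSup_le (hne.image _)
  rintro a ⟨y, hy, rfl⟩
  obtain ⟨y', hy', hdy⟩ := hK'.exists_infDist_eq_dist hne' y
  have h1 : dist y y' ≤ hausdorffDist K K' := by
    rw [← hdy]; exact infDist_le_hausdorffDist_of_mem hy htop
  calc dist y x ≤ dist y y' + dist y' x := dist_triangle _ _ _
    _ ≤ hausdorffDist K K' + chebB K' x := add_le_add h1 (dist_le_chebB hK' hy' x)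
    _ = chebB K' x + hausdorffDist K K' := add_comm _ _

lemma abs_chebB_sub_chebB_le {K K' : Set X} (hK : IsCompact K) (hne : K.Nonempty)
    (hK' : IsCompact K') (hne' : K'.Nonempty) (x : X) :
    |chebB K x - chebB K' x| ≤ hausdorffDist K K' := by
  rw [abs_sub_le_iff]
  refine ⟨by linarith [chebB_le_of_hausdorff hK hne hK' hne' x], ?_⟩
  have := chebB_le_of_hausdorff hK' hne' hK hne x
  rw [hausdorffDist_comm] at this
  linarith

lemma exists_chebR0_eq {K : Set X} (hK : IsCompact K) (hne : K.Nonempty) :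
    ∃ x ∈ K, chebB K x = chebR0 K := by
  obtain ⟨x, hx, hx'⟩ := hK.exists_sInf_image_eq hne
    ((chebB_lipschitz hK hne).continuous.continuousOn)
  exact ⟨x, hx, (chebR0_eq K ▸ hx').symm⟩

lemma chebR0_le_chebB {K : Set X} (hK : IsCompact K) (hne : K.Nonempty) {x : X}
    (hx : x ∈ K) : chebR0 K ≤ chebB K x := by
  rw [chebR0_eq]
  exact csInf_le ⟨0, by rintro a ⟨y, hy, rfl⟩; exact chebB_nonneg hK hne y⟩ ⟨x, hx, rfl⟩

lemma chebR0_le_of_hausdorff {K K' : Set X} (hK : IsCompact K) (hne : K.Nonempty)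
    (hK' : IsCompact K') (hne' : K'.Nonempty) :
    chebR0 K ≤ chebR0 K' + 2 * hausdorffDist K K' := by
  have htop : EMetric.hausdorffEdist K' K ≠ ⊤ :=
    hausdorffEdist_ne_top_of_nonempty_of_bounded hne' hne hK'.isBounded hK.isBounded
  obtain ⟨x', hx', hbx'⟩ := exists_chebR0_eq hK' hne'
  obtain ⟨x, hx, hdx⟩ := hK.exists_infDist_eq_dist hne x'
  have h1 : dist x' x ≤ hausdorffDist K K' := by
    rw [← hdx, hausdorffDist_comm]
    exact infDist_le_hausdorffDist_of_mem hx' htop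
  calc chebR0 K ≤ chebB K x := chebR0_le_chebB hK hne hx
    _ ≤ chebB K' x + hausdorffDist K K' := chebB_le_of_hausdorff hK hne hK' hne' x
    _ ≤ (chebB K' x' + dist x' x) + hausdorffDist K K' := by
        linarith [chebB_le_add_dist hK' hne' x x']
    _ ≤ chebR0 K' + 2 * hausdorffDist K K' := by rw [hbx']; linarith

lemma abs_chebR0_sub_le {K K' : Set X} (hK : IsCompact K) (hne : K.Nonempty)
    (hK' : IsCompact K') (hne' : K'.Nonempty) :
    |chebR0 K - chebR0 K'| ≤ 2 * hausdorffDist K K' := by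
  rw [abs_sub_le_iff]
  refine ⟨by linarith [chebR0_le_of_hausdorff hK hne hK' hne'], ?_⟩
  have := chebR0_le_of_hausdorff hK' hne' hK hne
  rw [hausdorffDist_comm] at this
  linarith

lemma chebZ0_nonempty {K : Set X} (hK : IsCompact K) (hne : K.Nonempty) :
    (chebZ0 K).Nonempty := by
  obtain ⟨x, hx, hbx⟩ := exists_chebR0_eq hK hne
  exact ⟨x, hx, hbx⟩

lemma chebZ0_subset (K : Set X) : chebZ0 K ⊆ K := fun _ hx => hx.1

lemma chebZ0_compact {K : Set X} (hK : IsCompact K) (hne : K.Nonempty) :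
    IsCompact (chebZ0 K) := by
  have : chebZ0 K = K ∩ (chebB K ⁻¹' {chebR0 K}) := by
    ext x; simp [chebZ0_eq, Set.mem_setOf_eq]
  rw [this]
  exact hK.inter_right (isClosed_singleton.preimage (chebB_lipschitz hK hne).continuous)

end Aux

/-- From any sequence of nonempty compact sets converging in the Hausdorff metric to a
nonempty compact set `L` one can extract a subsequence for which the sets of relative
Chebyshev centers converge to `chebZ0 L` with respect to the Hausdorff deviation. -/
theorem chebyshev_centers_deviation_tendsto_zero {X : Type*} [MetricSpace X]
    (M : ℕ → Set X) (hMne : ∀ n, (M n).Nonempty) (hMc : ∀ n, IsCompact (M n))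
    (L : Set X) (hLne : L.Nonempty) (hLc : IsCompact L)
    (hconv : Tendsto (fun n => hausdorffDist (M n) L) atTop (nhds 0)) :
    ∃ φ : ℕ → ℕ, StrictMono φ ∧
      Tendsto (fun n => sSup ((fun z => infDist z (chebZ0 L)) '' chebZ0 (M (φ n))))
        atTop (nhds 0) := by
  have hZc : ∀ n, IsCompact (chebZ0 (M n)) := fun n => chebZ0_compact (hMc n) (hMne n)
  have hZne : ∀ n, (chebZ0 (M n)).Nonempty := fun n => chebZ0_nonempty (hMc n) (hMne n)
  -- pick a point attaining the sup
  have hz : ∀ n, ∃ x ∈ chebZ0 (M n),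
      sSup ((fun z => infDist z (chebZ0 L)) '' chebZ0 (M n)) = infDist x (chebZ0 L) :=
    fun n => (hZc n).exists_sSup_image_eq (hZne n)
      ((continuous_infDist_pt (chebZ0 L)).continuousOn)
  choose z hzmem hzsup using hz
  have hzM : ∀ n, z n ∈ M n := fun n => (hzmem n).1
  have hzB : ∀ n, chebB (M n) (z n) = chebR0 (M n) := fun n => (hzmem n).2
  have htop : ∀ n, EMetric.hausdorffEdist (M n) L ≠ ⊤ := fun n =>
    hausdorffEdist_ne_top_of_nonempty_of_bounded (hMne n) hLne (hMc n).isBounded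
      hLc.isBounded
  -- pick nearest points in L
  have hw : ∀ n, ∃ y ∈ L, infDist (z n) L = dist (z n) y :=
    fun n => hLc.exists_infDist_eq_dist hLne (z n)
  choose w hwL hwd using hw
  have hzw : ∀ n, dist (z n) (w n) ≤ hausdorffDist (M n) L := fun n => by
    rw [← hwd n]; exact infDist_le_hausdorffDist_of_mem (hzM n) (htop n)
  -- extract convergent subsequence of w
  obtain ⟨a, haL, φ, hφ, hwa⟩ := hLc.tendsto_subseq hwL
  refine ⟨φ, hφ, ?_⟩
  have hHφ : Tendsto (fun n => hausdorffDist (M (φ n)) L) atTop (nhds 0) :=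
    hconv.comp hφ.tendsto_atTop
  have hwa' : Tendsto (fun n => dist (w (φ n)) a) atTop (nhds 0) :=
    (tendsto_iff_dist_tendsto_zero.mp hwa)
  -- z ∘ φ tends to a
  have hza : Tendsto (fun n => dist (z (φ n)) a) atTop (nhds 0) := by
    apply squeeze_zero (fun n => dist_nonneg)
      (g := fun n => hausdorffDist (M (φ n)) L + dist (w (φ n)) a)
    · intro n
      calc dist (z (φ n)) a ≤ dist (z (φ n)) (w (φ n)) + dist (w (φ n)) a :=
            dist_triangle _ _ _
        _ ≤ hausdorffDist (M (φ n)) L + dist (w (φ n)) a :=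
            add_le_add (hzw (φ n)) le_rfl
    · simpa using hHφ.add hwa'
  -- a is a Chebyshev center of L
  have haZ : a ∈ chebZ0 L := by
    refine ⟨haL, ?_⟩
    have key : ∀ n, |chebB L a - chebR0 L| ≤
        dist (z (φ n)) a + 3 * hausdorffDist (M (φ n)) L := by
      intro n
      have h1 : |chebB L a - chebB L (z (φ n))| ≤ dist (z (φ n)) a := by
        rw [dist_comm]; exact abs_chebB_sub_le hLc hLne a (z (φ n))
      have h2 : |chebB L (z (φ n)) - chebB (M (φ n)) (z (φ n))| ≤
          hausdorffDist (M (φ n)) L := by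
        have := abs_chebB_sub_chebB_le hLc hLne (hMc (φ n)) (hMne (φ n)) (z (φ n))
        rwa [hausdorffDist_comm] at this
      have h3 : |chebR0 (M (φ n)) - chebR0 L| ≤ 2 * hausdorffDist (M (φ n)) L :=
        abs_chebR0_sub_le (hMc (φ n)) (hMne (φ n)) hLc hLne
      calc |chebB L a - chebR0 L|
          ≤ |chebB L a - chebB L (z (φ n))| + |chebB L (z (φ n)) - chebR0 L| :=
            abs_sub_le _ _ _
        _ ≤ |chebB L a - chebB L (z (φ n))| +
            (|chebB L (z (φ n)) - chebB (M (φ n)) (z (φ n))| +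
             |chebB (M (φ n)) (z (φ n)) - chebR0 L|) := by
            linarith [abs_sub_le (chebB L (z (φ n))) (chebB (M (φ n)) (z (φ n)))
              (chebR0 L)]
        _ ≤ dist (z (φ n)) a + (hausdorffDist (M (φ n)) L +
              2 * hausdorffDist (M (φ n)) L) := by
            rw [hzB (φ n)] at *
            linarith
        _ = dist (z (φ n)) a + 3 * hausdorffDist (M (φ n)) L := by ring
    have hlim : Tendsto (fun n => dist (z (φ n)) a + 3 * hausdorffDist (M (φ n)) L)
        atTop (nhds 0) := by
      simpa using hza.add (hHφ.const_mul 3)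
    have : |chebB L a - chebR0 L| ≤ 0 := ge_of_tendsto hlim (Eventually.of_forall key)
    have := abs_nonpos_iff.mp this
    exact sub_eq_zero.mp this
  -- conclude by squeeze
  apply squeeze_zero (g := fun n => dist (z (φ n)) a)
  · intro n
    rw [hzsup (φ n)]
    exact infDist_nonneg
  · intro n
    rw [hzsup (φ n)]
    exact infDist_le_dist_of_mem haZ
  · exact hza
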